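/- Let p be an odd prime, l ≥ 3, and ω₀ a primitive element of F_p. Let t₁ > t₂ be integers with ord(ω₀^{t₁}) = m₁, ord(ω₀^{t₂}) = m₂, lcm(m₁,m₂) = l, and gcd(t₁ - t₂, l) = 1. Then there is no nonzero binomial c(x) = 1 + a₁x^t with a₁ ≠ 0 and 0 < t < lp such that c(ω₀^{t₁}) = c(ω₀^{t₂}) = 0 and the formal derivative c'(ω₀^{t₁}) = 0. -/

import Mathlib

open Polynomial

theorem stmt_7 (p : ℕ) (hp : p.Prime) (hodd : p ≠ 2) (l : ℕ) (hl : 3 ≤ l)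
    (ω₀ : ZMod p) (hω₀ : orderOf ω₀ = p - 1)
    (t₁ t₂ m₁ m₂ : ℕ) (ht : t₂ < t₁)
    (hm₁ : orderOf (ω₀ ^ t₁) = m₁) (hm₂ : orderOf (ω₀ ^ t₂) = m₂)
    (hlcm : Nat.lcm m₁ m₂ = l) (hgcd : Nat.gcd (t₁ - t₂) l = 1) :
    ¬ ∃ (a₁ : ZMod p) (t : ℕ), a₁ ≠ 0 ∧ 0 < t ∧ t < l * p ∧
      (let c : Polynomial (ZMod p) := 1 + C a₁ * X ^ t
       c.eval (ω₀ ^ t₁) = 0 ∧ c.eval (ω₀ ^ t₂) = 0 ∧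
       (derivative c).eval (ω₀ ^ t₁) = 0) := by
  haveI := Fact.mk hp
  rintro ⟨a₁, t, ha₁, htpos, htlt, hc₁, hc₂, hd⟩
  have hp3 : 3 ≤ p := by
    have := hp.two_le; omega
  -- ω₀ ≠ 0
  have hω₀ne : ω₀ ≠ 0 := by
    intro h
    have h1 : ω₀ ^ (p - 1) = 1 := hω₀ ▸ pow_orderOf_eq_one ω₀
    rw [h, zero_pow (by omega : p - 1 ≠ 0)] at h1
    exact zero_ne_one h1
  -- derivative condition forces p ∣ t
  have hd' : a₁ * ((t : ZMod p) * (ω₀ ^ t₁) ^ (t - 1)) = 0 := by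
    simpa [derivative_X_pow] using hd
  have hxne : (ω₀ ^ t₁) ^ (t - 1) ≠ 0 := pow_ne_zero _ (pow_ne_zero _ hω₀ne)
  have htz : (t : ZMod p) = 0 := by
    rcases mul_eq_zero.mp hd' with h | h
    · exact absurd h ha₁
    · rcases mul_eq_zero.mp h with h | h
      · exact h
      · exact absurd h hxne
  have hpt : p ∣ t := (ZMod.natCast_eq_zero_iff t p).mp htz
  -- eval conditions
  have he₁ : a₁ * ω₀ ^ (t₁ * t) = -1 := by
    have := hc₁
    simp only [eval_add, eval_one, eval_mul, eval_C, eval_pow, eval_X] at this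
    rw [← pow_mul] at this
    linear_combination this
  have he₂ : a₁ * ω₀ ^ (t₂ * t) = -1 := by
    have := hc₂
    simp only [eval_add, eval_one, eval_mul, eval_C, eval_pow, eval_X] at this
    rw [← pow_mul] at this
    linear_combination this
  have hpow : ω₀ ^ (t₁ * t) = ω₀ ^ (t₂ * t) :=
    mul_left_cancel₀ ha₁ (he₁.trans he₂.symm)
  have hsplit : t₂ * t + (t₁ - t₂) * t = t₁ * t := by
    rw [← Nat.add_mul]; congr 1; omega
  have hone : ω₀ ^ ((t₁ - t₂) * t) = 1 := by
    have h := hpow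
    rw [← hsplit, pow_add] at h
    have := mul_left_cancel₀ (pow_ne_zero (t₂ * t) hω₀ne)
      (h.trans (mul_one _).symm)
    exact this
  have horder : (p - 1) ∣ (t₁ - t₂) * t := hω₀ ▸ orderOf_dvd_of_pow_eq_one hone
  -- l ∣ p - 1
  have hm₁d : m₁ ∣ p - 1 := by rw [← hm₁, ← hω₀]; exact orderOf_pow_dvd t₁
  have hm₂d : m₂ ∣ p - 1 := by rw [← hm₂, ← hω₀]; exact orderOf_pow_dvd t₂
  have hld : l ∣ p - 1 := hlcm ▸ Nat.lcm_dvd hm₁d hm₂d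
  have hlt' : l ∣ (t₁ - t₂) * t := hld.trans horder
  have hcop : Nat.Coprime l (t₁ - t₂) := (Nat.coprime_iff_gcd_eq_one.mpr hgcd).symm
  have hlt : l ∣ t := hcop.dvd_of_dvd_mul_left hlt'
  -- gcd(l, p) = 1
  have hple : l ≤ p - 1 := Nat.le_of_dvd (by omega) hld
  have hcop2 : Nat.Coprime p l := (Nat.Prime.coprime_iff_not_dvd hp).mpr
    (fun h => absurd (Nat.le_of_dvd (by omega) h) (by omega))
  have hlp : l * p ∣ t := Nat.Coprime.mul_dvd_of_dvd_of_dvd hcop2.symm hlt hpt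
  exact absurd (Nat.le_of_dvd htpos hlp) (by omega)
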